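/- Let A be a nonempty line arrangement in ℝ² with |A| = n lines, and let p(A) be the maximal number of pairwise parallel lines in A. Then the minimal degree of a nonzero parallel polynomial vector field fixing every line of A is exactly n − p(A): there exists a nonzero parallel vector field of degree n − p(A) fixing A, and every nonzero parallel vector field fixing A has degree at least n − p(A). -/

import Mathlib

open MvPolynomial

/-- Evaluation of a bivariate polynomial at a point of `ℝ × ℝ`
(the variable `X 0` is `x`, the variable `X 1` is `y`). -/
noncomputable def pev (P : MvPolynomial (Fin 2) ℝ) (q : ℝ × ℝ) : ℝ :=
  MvPolynomial.eval ![q.1, q.2] P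

/-- The line `{(x, y) | a * x + b * y + c = 0}`. -/
def lineSet (a b c : ℝ) : Set (ℝ × ℝ) := {q : ℝ × ℝ | a * q.1 + b * q.2 + c = 0}

/-- A subset of `ℝ²` is a line if it is the zero set of an affine form
`a * x + b * y + c` with `(a, b) ≠ (0, 0)`. -/
def IsLine (L : Set (ℝ × ℝ)) : Prop :=
  ∃ a b c : ℝ, (a, b) ≠ (0, 0) ∧ L = lineSet a b c

/-- The line `L` is invariant by the polynomial vector field `χ = P ∂x + Q ∂y`:
for a defining affine form `a * x + b * y + c` of `L`, the polynomial
`a * P + b * Q` vanishes at every point of `L`. -/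
def InvLine (P Q : MvPolynomial (Fin 2) ℝ) (L : Set (ℝ × ℝ)) : Prop :=
  ∃ a b c : ℝ, (a, b) ≠ (0, 0) ∧ L = lineSet a b c ∧
    ∀ q ∈ L, a * pev P q + b * pev Q q = 0

/-- A nonzero polynomial vector field `(P, Q)` is central if there is a center
`(x₀, y₀)` with `(x - x₀) * Q = (y - y₀) * P` identically. -/
def IsCentral (P Q : MvPolynomial (Fin 2) ℝ) : Prop :=
  (P ≠ 0 ∨ Q ≠ 0) ∧ ∃ c : ℝ × ℝ, (X 0 - C c.1) * Q = (X 1 - C c.2) * P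

/-- A nonzero polynomial vector field `(P, Q)` is parallel if there is a direction
`v ≠ (0, 0)` with `v₁ * Q = v₂ * P` identically. -/
def IsParallelVF (P Q : MvPolynomial (Fin 2) ℝ) : Prop :=
  (P ≠ 0 ∨ Q ≠ 0) ∧ ∃ v : ℝ × ℝ, v ≠ (0, 0) ∧ C v.1 * Q = C v.2 * P

open scoped Classical in
/-- The number of lines of the arrangement `A` passing through the point `q`. -/
noncomputable def numThrough (A : Finset (Set (ℝ × ℝ))) (q : ℝ × ℝ) : ℕ :=
  (A.filter (fun L => q ∈ L)).card

/-- `mArr A` is the maximal number of lines of `A` passing through a common point. -/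
noncomputable def mArr (A : Finset (Set (ℝ × ℝ))) : ℕ :=
  sSup (Set.range (numThrough A))

/-- Two lines are parallel if they are equal or disjoint. -/
def ParLines (L L' : Set (ℝ × ℝ)) : Prop := L = L' ∨ L ∩ L' = ∅

/-- `pArr A` is the maximal number of pairwise parallel lines in `A`. -/
noncomputable def pArr (A : Finset (Set (ℝ × ℝ))) : ℕ :=
  sSup {k : ℕ | ∃ S : Finset (Set (ℝ × ℝ)), S ⊆ A ∧
    (∀ L ∈ S, ∀ L' ∈ S, ParLines L L') ∧ S.card = k}


open MvPolynomial

noncomputable def linF (a b c : ℝ) : MvPolynomial (Fin 2) ℝ := C a * X 0 + C b * X 1 + C c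

lemma pev_mul (P Q : MvPolynomial (Fin 2) ℝ) (q : ℝ × ℝ) :
    pev (P * Q) q = pev P q * pev Q q := by simp [pev]

lemma pev_linF (a b c : ℝ) (q : ℝ × ℝ) : pev (linF a b c) q = a * q.1 + b * q.2 + c := by
  simp [pev, linF]

lemma mem_lineSet_iff {a b c : ℝ} {q : ℝ × ℝ} : q ∈ lineSet a b c ↔ a * q.1 + b * q.2 + c = 0 :=
  Iff.rfl

lemma lineSet_smul {a b c l : ℝ} (hl : l ≠ 0) : lineSet (l*a) (l*b) (l*c) = lineSet a b c := by
  ext q; simp only [mem_lineSet_iff]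
  constructor
  · intro h
    have h2 : l * (a * q.1 + b * q.2 + c) = 0 := by linear_combination h
    rcases mul_eq_zero.1 h2 with h' | h'
    · exact absurd h' hl
    · exact h'
  · intro h; linear_combination l * h

lemma lineSet_nonempty {a b c : ℝ} (h : (a, b) ≠ (0, 0)) : (lineSet a b c).Nonempty := by
  have hd : a^2 + b^2 ≠ 0 := by
    intro h0
    apply h
    have ha : a = 0 := by nlinarith [sq_nonneg a, sq_nonneg b]
    have hb : b = 0 := by nlinarith [sq_nonneg a, sq_nonneg b]
    simp [ha, hb]
  refine ⟨(-(a*c)/(a^2+b^2), -(b*c)/(a^2+b^2)), ?_⟩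
  simp only [mem_lineSet_iff]
  field_simp
  ring

/-- equal lines have proportional normals -/
lemma lineSet_eq_det {a b c a' b' c' : ℝ} (h : lineSet a b c = lineSet a' b' c')
    (hab : (a, b) ≠ (0, 0)) : a * b' = a' * b := by
  obtain ⟨q, hq⟩ := lineSet_nonempty (c := c) hab
  have hq2 : (q.1 - b, q.2 + a) ∈ lineSet a b c := by
    simp only [mem_lineSet_iff] at hq ⊢; linear_combination hq
  have h1 : q ∈ lineSet a' b' c' := h ▸ hq
  have h2 : (q.1 - b, q.2 + a) ∈ lineSet a' b' c' := h ▸ hq2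
  simp only [mem_lineSet_iff] at h1 h2
  nlinarith [h1, h2]

/-- nonparallel lines meet -/
lemma lines_meet {a b c a' b' c' : ℝ} (h : a * b' ≠ a' * b) :
    (lineSet a b c ∩ lineSet a' b' c').Nonempty := by
  set D := a * b' - a' * b with hD
  have hD0 : D ≠ 0 := sub_ne_zero.2 h
  refine ⟨((b * c' - b' * c)/D, (a' * c - a * c')/D), ?_, ?_⟩ <;>
  · simp only [mem_lineSet_iff]
    field_simp
    ring

lemma parLines_det {a b c a' b' c' : ℝ} (hab : (a, b) ≠ (0, 0))
    (h : ParLines (lineSet a b c) (lineSet a' b' c')) : a * b' = a' * b := by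
  rcases h with h | h
  · exact lineSet_eq_det h hab
  · by_contra hne
    obtain ⟨q, hq⟩ := lines_meet (c := c) (c' := c') hne
    rw [← Set.mem_empty_iff_false q, ← h]; exact hq

/-- proportional normals + common point ⇒ equal lines -/
lemma lineSet_eq_of_det_of_mem {a b c a' b' c' : ℝ} (hab : (a, b) ≠ (0, 0))
    (hab' : (a', b') ≠ (0, 0)) (hdet : a * b' = a' * b) {q : ℝ × ℝ}
    (hq : q ∈ lineSet a b c) (hq' : q ∈ lineSet a' b' c') :
    lineSet a b c = lineSet a' b' c' := by
  have hd : a^2 + b^2 ≠ 0 := by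
    intro h0
    apply hab
    have ha : a = 0 := by nlinarith [sq_nonneg a, sq_nonneg b]
    have hb : b = 0 := by nlinarith [sq_nonneg a, sq_nonneg b]
    simp [ha, hb]
  set l := (a*a' + b*b')/(a^2+b^2) with hl
  have ha' : a' = l * a := by rw [hl, div_mul_eq_mul_div, eq_div_iff hd]; linear_combination (-b) * hdet
  have hb' : b' = l * b := by rw [hl, div_mul_eq_mul_div, eq_div_iff hd]; linear_combination a * hdet
  have hc' : c' = l * c := by
    simp only [mem_lineSet_iff] at hq hq'
    rw [ha', hb'] at hq'; linear_combination hq' - l * hq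
  have hl0 : l ≠ 0 := by
    intro h0; apply hab'; rw [ha', hb', h0]; simp
  rw [ha', hb', hc', lineSet_smul hl0]

/-- two normals orthogonal to a common nonzero direction are proportional -/
lemma det_of_orth {a b a' b' w1 w2 : ℝ} (hw : (w1, w2) ≠ (0, 0))
    (h : a * w1 + b * w2 = 0) (h' : a' * w1 + b' * w2 = 0) : a * b' = a' * b := by
  have : w1 ≠ 0 ∨ w2 ≠ 0 := by
    by_contra hc; push_neg at hc; exact hw (by simp [hc.1, hc.2])
  rcases this with hw1 | hw2
  · have h2 : (a * b' - a' * b) * w1 = 0 := by linear_combination b' * h - b * h'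
    rcases mul_eq_zero.1 h2 with h0 | h0
    · linarith [h0]
    · exact absurd h0 hw1
  · have h2 : (a * b' - a' * b) * w2 = 0 := by linear_combination a * h' - a' * h
    rcases mul_eq_zero.1 h2 with h0 | h0
    · linarith [h0]
    · exact absurd h0 hw2


open MvPolynomial


lemma finSuccEquiv_C' (r : ℝ) :
    finSuccEquiv ℝ 1 (C r) = Polynomial.C (C r) := by
  simp [finSuccEquiv_apply]

lemma finSuccEquiv_X1 :
    finSuccEquiv ℝ 1 (X 1) = Polynomial.C (X 0) := by
  have h1 : (X (1 : Fin 2) : MvPolynomial (Fin 2) ℝ) = X (Fin.succ 0) := rfl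
  rw [h1, finSuccEquiv_X_succ]

lemma finSuccEquiv_linF {a b c : ℝ} (ha : a ≠ 0) :
    finSuccEquiv ℝ 1 (linF a b c) =
      Polynomial.C (C a) *
        (Polynomial.X - Polynomial.C (C (-(c/a)) + C (-(b/a)) * X 0)) := by
  rw [linF, map_add, map_add, map_mul, map_mul, finSuccEquiv_C', finSuccEquiv_C',
    finSuccEquiv_C', finSuccEquiv_X_zero, finSuccEquiv_X1]
  have h1 : a * -(c/a) = -c := by field_simp
  have h2 : a * -(b/a) = -b := by field_simp
  have key : (C a : MvPolynomial (Fin 1) ℝ) * (C (-(c/a)) + C (-(b/a)) * X 0)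
      = -(C c + C b * X 0) := by
    rw [mul_add, ← C_mul, h1, ← mul_assoc, ← C_mul, h2, C_neg, C_neg]
    ring
  have key' : Polynomial.C (C a) * Polynomial.C (C (-(c/a)) + C (-(b/a)) * X 0)
      = Polynomial.C (-(C c + C b * (X 0 : MvPolynomial (Fin 1) ℝ))) := by
    rw [← Polynomial.C_mul, key]
  rw [mul_sub, key', Polynomial.C_neg, map_add, Polynomial.C_mul]
  ring

lemma prime_linF_a {a b c : ℝ} (ha : a ≠ 0) : Prime (linF a b c) := by
  have h := finSuccEquiv_linF (b := b) (c := c) ha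
  have hu : IsUnit (Polynomial.C (C a) : Polynomial (MvPolynomial (Fin 1) ℝ)) := by
    refine IsUnit.of_mul_eq_one (Polynomial.C (C a⁻¹)) ?_
    rw [← Polynomial.C_mul, ← C_mul, mul_inv_cancel₀ ha]; simp
  have hp : Prime (Polynomial.X - Polynomial.C (C (-(c/a)) + C (-(b/a)) * X 0) :
      Polynomial (MvPolynomial (Fin 1) ℝ)) := Polynomial.prime_X_sub_C _
  have hassoc : Associated
      (Polynomial.X - Polynomial.C (C (-(c/a)) + C (-(b/a)) * X 0) :
        Polynomial (MvPolynomial (Fin 1) ℝ))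
      (finSuccEquiv ℝ 1 (linF a b c)) := by
    rw [h]; exact ⟨hu.unit, by rw [IsUnit.unit_spec]; ring⟩
  have h2 : Prime (finSuccEquiv ℝ 1 (linF a b c)) := hassoc.prime hp
  exact (MulEquiv.prime_iff (finSuccEquiv ℝ 1).toRingEquiv.toMulEquiv).1 h2

lemma rename_swap_linF (a b c : ℝ) :
    rename (Equiv.swap (0 : Fin 2) 1) (linF a b c) = linF b a c := by
  simp only [linF, map_add, map_mul, rename_C, rename_X, Equiv.swap_apply_left,
    Equiv.swap_apply_right]
  ring

lemma prime_linF {a b c : ℝ} (hab : (a, b) ≠ (0, 0)) : Prime (linF a b c) := by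
  rcases (by
    by_contra hc; push_neg at hc; exact hab (by simp [hc.1, hc.2]) : a ≠ 0 ∨ b ≠ 0) with ha | hb
  · exact prime_linF_a ha
  · have h2 : Prime (linF b a c) := prime_linF_a hb
    have h3 := (MulEquiv.prime_iff (renameEquiv ℝ (Equiv.swap (0 : Fin 2) 1)).toRingEquiv.toMulEquiv).2 h2
    simpa [renameEquiv_apply, rename_swap_linF] using h3

lemma pev_rename_swap (P : MvPolynomial (Fin 2) ℝ) (q : ℝ × ℝ) :
    pev (rename (Equiv.swap (0 : Fin 2) 1) P) q = pev P (q.2, q.1) := by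
  have hfun : (![q.1, q.2] ∘ (Equiv.swap (0 : Fin 2) 1)) = ![q.2, q.1] := by
    funext i; fin_cases i <;> simp
  rw [pev, pev, eval_rename, hfun]

lemma vanish_dvd_a {a b c : ℝ} (ha : a ≠ 0) (P : MvPolynomial (Fin 2) ℝ)
    (h : ∀ q ∈ lineSet a b c, pev P q = 0) : linF a b c ∣ P := by
  set r : MvPolynomial (Fin 1) ℝ := C (-(c/a)) + C (-(b/a)) * X 0 with hr
  have hroot : (finSuccEquiv ℝ 1 P).IsRoot r := by
    show Polynomial.eval r (finSuccEquiv ℝ 1 P) = 0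
    apply MvPolynomial.funext
    intro x
    rw [map_zero]
    have hcomm : eval x (Polynomial.eval r (finSuccEquiv ℝ 1 P))
        = eval (Fin.cons (eval x r) x) P := by
      rw [← Polynomial.eval₂_hom (eval x) , Polynomial.eval₂_eq_eval_map,
        eval_eq_eval_mv_eval']
    rw [hcomm]
    have hy : eval x r = -(c/a) + -(b/a) * x 0 := by simp [hr]
    have hcons : (Fin.cons (eval x r) x : Fin 2 → ℝ) = ![eval x r, x 0] := by
      funext i
      fin_cases i <;> rfl
    rw [hcons]
    have hmem : ((eval x r : ℝ), x 0) ∈ lineSet a b c := by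
      show a * (eval x r) + b * (x 0) + c = 0
      rw [hy]
      field_simp
      ring
    have := h _ hmem
    simpa [pev] using this
  have hdvd1 : (Polynomial.X - Polynomial.C r) ∣ finSuccEquiv ℝ 1 P :=
    Polynomial.dvd_iff_isRoot.2 hroot
  have hu : IsUnit (Polynomial.C (C a) : Polynomial (MvPolynomial (Fin 1) ℝ)) := by
    refine IsUnit.of_mul_eq_one (Polynomial.C (C a⁻¹)) ?_
    rw [← Polynomial.C_mul, ← C_mul, mul_inv_cancel₀ ha]; simp
  have hdvd2 : finSuccEquiv ℝ 1 (linF a b c) ∣ finSuccEquiv ℝ 1 P := by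
    rw [finSuccEquiv_linF ha]
    exact (IsUnit.mul_left_dvd hu).2 hdvd1
  have hdvd3 := map_dvd (finSuccEquiv ℝ 1).symm hdvd2
  simpa using hdvd3

lemma vanish_dvd {a b c : ℝ} (hab : (a, b) ≠ (0, 0)) (P : MvPolynomial (Fin 2) ℝ)
    (h : ∀ q ∈ lineSet a b c, pev P q = 0) : linF a b c ∣ P := by
  rcases (by
    by_contra hc; push_neg at hc; exact hab (by simp [hc.1, hc.2]) : a ≠ 0 ∨ b ≠ 0) with ha | hb
  · exact vanish_dvd_a ha P h
  · have h' : ∀ q ∈ lineSet b a c, pev (rename (Equiv.swap (0 : Fin 2) 1) P) q = 0 := by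
      intro q hq
      rw [pev_rename_swap]
      apply h
      show a * q.2 + b * q.1 + c = 0
      have : b * q.1 + a * q.2 + c = 0 := hq
      linarith
    have hdvd := vanish_dvd_a hb _ h'
    have hdvd2 := map_dvd (rename (Equiv.swap (0 : Fin 2) 1)) hdvd
    rw [rename_swap_linF] at hdvd2
    rw [rename_rename] at hdvd2
    have hid : (⇑(Equiv.swap (0 : Fin 2) 1) ∘ ⇑(Equiv.swap (0 : Fin 2) 1)) = id := by
      funext i; simp
    rwa [hid, rename_id] at hdvd2


noncomputable def psi (s : ℝ) : MvPolynomial (Fin 2) ℝ →ₐ[ℝ] Polynomial ℝ :=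
  aeval ![Polynomial.X, Polynomial.C s * Polynomial.X]

lemma psi_natDegree_le (s : ℝ) (F : MvPolynomial (Fin 2) ℝ) :
    (psi s F).natDegree ≤ F.totalDegree := by
  have h := MvPolynomial.aeval_natDegree_le (m := F.totalDegree) (n := 1) F le_rfl
      ![Polynomial.X, Polynomial.C s * Polynomial.X] (fun i => by
        fin_cases i
        · simp
        · exact (Polynomial.natDegree_C_mul_le _ _).trans (by simp))
  simpa [psi] using h

lemma psi_linF (s a b c : ℝ) :
    psi s (linF a b c) = Polynomial.C (a + b * s) * Polynomial.X + Polynomial.C c := by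
  simp only [psi, linF, map_add, map_mul, aeval_C, aeval_X]
  simp only [Matrix.cons_val_zero, Matrix.cons_val_one, Matrix.head_cons]
  simp only [Polynomial.algebraMap_eq, Polynomial.C_add, Polynomial.C_mul]
  ring

lemma totalDegree_linF_le (a b c : ℝ) : (linF a b c).totalDegree ≤ 1 := by
  refine (totalDegree_add _ _).trans ?_
  simp only [max_le_iff]
  constructor
  · refine (totalDegree_add _ _).trans ?_
    simp only [max_le_iff]
    constructor <;>
    · refine (totalDegree_mul _ _).trans ?_
      simp [totalDegree_C, totalDegree_X]
  · simp [totalDegree_C]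

lemma linF_ne_zero {a b c : ℝ} (hab : (a, b) ≠ (0, 0)) : linF a b c ≠ 0 :=
  (prime_linF hab).ne_zero

open scoped Classical in
noncomputable def formOf (L : Set (ℝ × ℝ)) : ℝ × ℝ × ℝ :=
  if h : IsLine L then (h.choose, h.choose_spec.choose, h.choose_spec.choose_spec.choose)
  else (1, 0, 0)

lemma formOf_spec {L : Set (ℝ × ℝ)} (h : IsLine L) :
    ((formOf L).1, (formOf L).2.1) ≠ (0, 0) ∧
      L = lineSet (formOf L).1 (formOf L).2.1 (formOf L).2.2 := by
  simp only [formOf, dif_pos h]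
  exact ⟨h.choose_spec.choose_spec.choose_spec.1, h.choose_spec.choose_spec.choose_spec.2⟩

noncomputable def linFOf (L : Set (ℝ × ℝ)) : MvPolynomial (Fin 2) ℝ :=
  linF (formOf L).1 (formOf L).2.1 (formOf L).2.2

lemma pev_linF' (a b c : ℝ) (q : ℝ × ℝ) : pev (linF a b c) q = a * q.1 + b * q.2 + c := by
  simp [pev, linF]

lemma prime_linFOf {L : Set (ℝ × ℝ)} (h : IsLine L) : Prime (linFOf L) :=
  prime_linF (formOf_spec h).1

lemma zeroset_linFOf {L : Set (ℝ × ℝ)} (h : IsLine L) :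
    {q : ℝ × ℝ | pev (linFOf L) q = 0} = L := by
  obtain ⟨-, hL⟩ := formOf_spec h
  ext q
  rw [Set.mem_setOf_eq, linFOf, pev_linF']
  conv_rhs => rw [hL]
  exact Iff.rfl

lemma eq_of_assoc_linFOf {L L' : Set (ℝ × ℝ)} (h : IsLine L) (h' : IsLine L')
    (ha : Associated (linFOf L) (linFOf L')) : L = L' := by
  obtain ⟨u, hu⟩ := ha
  have huq : ∀ q : ℝ × ℝ, pev (u : MvPolynomial (Fin 2) ℝ) q ≠ 0 := by
    intro q h0
    have h1 : (u : MvPolynomial (Fin 2) ℝ) * (u⁻¹ : (MvPolynomial (Fin 2) ℝ)ˣ) = 1 :=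
      u.mul_inv
    have := congrArg (fun p => pev p q) h1
    simp only [pev] at this ⊢
    rw [map_mul] at this
    simp only [pev] at h0
    rw [h0, zero_mul] at this
    simp at this
  rw [← zeroset_linFOf h, ← zeroset_linFOf h']
  ext q
  simp only [Set.mem_setOf_eq]
  rw [← hu]
  simp only [pev, map_mul]
  constructor
  · intro h0; rw [show (eval ![q.1,q.2]) (linFOf L) = 0 from h0, zero_mul]
  · intro h0
    rcases mul_eq_zero.1 h0 with h1 | h1
    · exact h1
    · exact absurd h1 (huq q)

lemma prod_linFOf_dvd (T : Finset (Set (ℝ × ℝ))) (hT : ∀ L ∈ T, IsLine L)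
    (f : MvPolynomial (Fin 2) ℝ) (hdvd : ∀ L ∈ T, linFOf L ∣ f) :
    (∏ L ∈ T, linFOf L) ∣ f := by
  classical
  induction T using Finset.induction_on generalizing f with
  | empty => simp
  | @insert L T hLT ih =>
    obtain ⟨g, hg⟩ := hdvd L (Finset.mem_insert_self _ _)
    have hgd : ∀ L' ∈ T, linFOf L' ∣ g := by
      intro L' hL'
      have hp' : Prime (linFOf L') := prime_linFOf (hT L' (Finset.mem_insert_of_mem hL'))
      have hd : linFOf L' ∣ linFOf L * g := by
        rw [← hg]; exact hdvd L' (Finset.mem_insert_of_mem hL')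
      rcases hp'.dvd_or_dvd hd with h1 | h1
      · exfalso
        have hpL : Prime (linFOf L) := prime_linFOf (hT L (Finset.mem_insert_self _ _))
        have hassoc : Associated (linFOf L') (linFOf L) :=
          hp'.associated_of_dvd hpL h1
        have heq : L' = L :=
          eq_of_assoc_linFOf (hT L' (Finset.mem_insert_of_mem hL'))
            (hT L (Finset.mem_insert_self _ _)) hassoc
        exact hLT (heq ▸ hL')
      · exact h1
    rw [Finset.prod_insert hLT, hg]
    exact mul_dvd_mul_left _ (ih (fun L' hL' => hT L' (Finset.mem_insert_of_mem hL')) g hgd)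

lemma eval_aeval_mv (g : Fin 2 → MvPolynomial (Fin 2) ℝ) (x : Fin 2 → ℝ)
    (f : MvPolynomial (Fin 2) ℝ) :
    eval x (aeval g f) = eval (fun i => eval x (g i)) f := by
  rw [aeval_def, eval₂_comp_left (eval x)]
  have hcomp : (eval x).comp (algebraMap ℝ (MvPolynomial (Fin 2) ℝ)) = RingHom.id ℝ := by
    ext r
    simp [MvPolynomial.algebraMap_eq]
  rw [hcomp, eval₂_id]
  rfl

lemma eval_psi (s t : ℝ) (f : MvPolynomial (Fin 2) ℝ) :
    Polynomial.eval t (psi s f) = eval ![t, s * t] f := by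
  rw [psi, aeval_def]
  have h := eval₂_comp_left (Polynomial.evalRingHom t) (algebraMap ℝ (Polynomial ℝ))
    ![Polynomial.X, Polynomial.C s * Polynomial.X] f
  have hcomp : (Polynomial.evalRingHom t).comp (algebraMap ℝ (Polynomial ℝ)) = RingHom.id ℝ := by
    ext r
    simp [Polynomial.algebraMap_eq]
  rw [hcomp, eval₂_id] at h
  have hval : ((Polynomial.evalRingHom t) ∘ ![Polynomial.X, Polynomial.C s * Polynomial.X])
      = ![t, s * t] := by
    funext i
    fin_cases i
    · simp [Function.comp]
    · show Polynomial.eval t (Polynomial.C s * Polynomial.X) = s * t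
      simp
  rw [hval] at h
  exact h

lemma eval_haux (s t : ℝ) (f : MvPolynomial (Fin 2) ℝ) :
    eval ![s, t] (aeval ![X 1, X 0 * X 1] f) = eval ![t, s * t] f := by
  rw [eval_aeval_mv]
  have harg : (fun i => eval ![s, t] (![(X 1 : MvPolynomial (Fin 2) ℝ), X 0 * X 1] i))
      = ![t, s * t] := by
    funext i
    fin_cases i <;> simp
  rw [harg]

lemma finite_bad_s (f : MvPolynomial (Fin 2) ℝ) (hf : f ≠ 0) :
    {s : ℝ | psi s f = 0}.Finite := by
  set h : MvPolynomial (Fin 2) ℝ := aeval ![X 1, X 0 * X 1] f with hh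
  have hhne : h ≠ 0 := by
    intro h0
    have hzero : ∀ x : Fin 2 → ℝ, eval x (X 0 * f) = 0 := by
      intro x
      rw [map_mul]
      rcases eq_or_ne (x 0) 0 with hx | hx
      · simp [eval_X, hx]
      · have hx2 : x = ![x 0, x 1] := by funext i; fin_cases i <;> rfl
        have := eval_haux (x 1 / x 0) (x 0) f
        rw [← hh, h0] at this
        simp only [map_zero] at this
        rw [div_mul_cancel₀ _ hx] at this
        rw [hx2, ← this, eval_X]
        ring
    have : (X 0 : MvPolynomial (Fin 2) ℝ) * f = 0 := by
      apply MvPolynomial.funext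
      intro x
      rw [hzero x, map_zero]
    rcases mul_eq_zero.1 this with h1 | h1
    · exact X_ne_zero 0 h1
    · exact hf h1
  set H := finSuccEquiv ℝ 1 h with hH
  have hHne : H ≠ 0 := by
    intro h0
    apply hhne
    have h1 : finSuccEquiv ℝ 1 h = 0 := by rw [← hH]; exact h0
    have h2 := congrArg (finSuccEquiv ℝ 1).symm h1
    rwa [AlgEquiv.symm_apply_apply, map_zero] at h2
  have hlc : H.leadingCoeff ≠ 0 := Polynomial.leadingCoeff_ne_zero.2 hHne
  have ht0 : ∃ t0 : ℝ, eval ![t0] H.leadingCoeff ≠ 0 := by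
    by_contra hc
    push_neg at hc
    apply hlc
    apply MvPolynomial.funext
    intro x
    have hx : x = ![x 0] := by funext i; fin_cases i <;> rfl
    rw [hx, map_zero]
    exact hc (x 0)
  obtain ⟨t0, ht0⟩ := ht0
  set Hp := H.map (eval ![t0] : MvPolynomial (Fin 1) ℝ →+* ℝ) with hHp
  have hHpne : Hp ≠ 0 := by
    intro h0
    apply ht0
    have hc : Hp.coeff H.natDegree = 0 := by rw [h0]; simp
    rw [hHp, Polynomial.coeff_map] at hc
    rw [Polynomial.leadingCoeff]
    exact hc
  apply Set.Finite.subset (Polynomial.finite_setOf_isRoot hHpne)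
  intro s hs
  simp only [Set.mem_setOf_eq] at hs ⊢
  show Hp.eval s = 0
  have h1 : Hp.eval s = eval (Fin.cons s ![t0]) h := by
    rw [hHp, ← eval_eq_eval_mv_eval']
  have hcons : (Fin.cons s ![t0] : Fin 2 → ℝ) = ![s, t0] := by
    funext i; fin_cases i <;> rfl
  rw [h1, hcons, hh, eval_haux, ← eval_psi, hs]
  simp

lemma finite_affine_zero {a b : ℝ} (hab : (a, b) ≠ (0, 0)) : {s : ℝ | a + b * s = 0}.Finite := by
  have hne : (Polynomial.C a + Polynomial.C b * Polynomial.X : Polynomial ℝ) ≠ 0 := by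
    intro h0
    apply hab
    have h1 : (Polynomial.C a + Polynomial.C b * Polynomial.X : Polynomial ℝ).coeff 0 = 0 := by
      rw [h0]; simp
    have h2 : (Polynomial.C a + Polynomial.C b * Polynomial.X : Polynomial ℝ).coeff 1 = 0 := by
      rw [h0]; simp
    simp at h1 h2
    simp [h1, h2, Prod.ext_iff]
  apply Set.Finite.subset (Polynomial.finite_setOf_isRoot hne)
  intro s hs
  simp only [Set.mem_setOf_eq] at hs ⊢
  show Polynomial.eval s _ = 0
  simpa using hs



lemma pev_C (x : ℝ) (q : ℝ × ℝ) : pev (C x) q = x := by simp [pev]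

lemma pev_linFOf_eq_zero {L : Set (ℝ × ℝ)} (h : IsLine L) {q : ℝ × ℝ} (hq : q ∈ L) :
    pev (linFOf L) q = 0 := by
  rw [← zeroset_linFOf h] at hq
  exact hq

lemma psi_C (s x : ℝ) : psi s (C x) = Polynomial.C x := by
  simp [psi, Polynomial.algebraMap_eq]

lemma natDegree_psi_linFOf {L : Set (ℝ × ℝ)} {s : ℝ}
    (hs : (formOf L).1 + (formOf L).2.1 * s ≠ 0) :
    (psi s (linFOf L)).natDegree = 1 ∧ psi s (linFOf L) ≠ 0 := by
  rw [linFOf, psi_linF]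
  refine ⟨Polynomial.natDegree_linear hs, ?_⟩
  intro h0
  have h1 := Polynomial.natDegree_linear (b := (formOf L).2.2) hs
  rw [h0] at h1
  simp at h1

lemma totalDegree_ge_of_prod_dvd {T : Finset (Set (ℝ × ℝ))} (hT : ∀ L ∈ T, IsLine L)
    {f : MvPolynomial (Fin 2) ℝ} (hf : f ≠ 0) (hdvd : (∏ L ∈ T, linFOf L) ∣ f) :
    T.card ≤ f.totalDegree := by
  classical
  have hbad : ({s : ℝ | psi s f = 0} ∪
      ⋃ L ∈ (T : Set (Set (ℝ × ℝ))), {s : ℝ | (formOf L).1 + (formOf L).2.1 * s = 0}).Finite :=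
    (finite_bad_s f hf).union (Set.Finite.biUnion T.finite_toSet
      (fun L hL => finite_affine_zero (formOf_spec (hT L hL)).1))
  obtain ⟨s, hs⟩ := (Set.Finite.infinite_compl hbad).nonempty
  simp only [Set.mem_compl_iff, Set.mem_union, Set.mem_iUnion, Set.mem_setOf_eq, not_or,
    not_exists] at hs
  obtain ⟨hsf, hsl⟩ := hs
  have hgood : ∀ L ∈ T, (formOf L).1 + (formOf L).2.1 * s ≠ 0 := fun L hL => hsl L hL
  have h1 : (∏ L ∈ T, psi s (linFOf L)) ∣ psi s f := by
    rw [← map_prod]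
    exact map_dvd _ hdvd
  have h2 : (∏ L ∈ T, psi s (linFOf L)).natDegree = T.card := by
    rw [Polynomial.natDegree_prod _ _ (fun L hL => (natDegree_psi_linFOf (hgood L hL)).2)]
    rw [Finset.sum_congr rfl (fun L hL => (natDegree_psi_linFOf (hgood L hL)).1)]
    simp
  calc T.card = (∏ L ∈ T, psi s (linFOf L)).natDegree := h2.symm
  _ ≤ (psi s f).natDegree := Polynomial.natDegree_le_of_dvd h1 hsf
  _ ≤ f.totalDegree := psi_natDegree_le s f

lemma totalDegree_C_mul_prod_le (T : Finset (Set (ℝ × ℝ))) (x : ℝ) :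
    (C x * ∏ L ∈ T, linFOf L).totalDegree ≤ T.card := by
  refine (totalDegree_mul _ _).trans ?_
  rw [totalDegree_C, zero_add]
  refine (totalDegree_finset_prod _ _).trans ?_
  calc ∑ L ∈ T, (linFOf L).totalDegree ≤ ∑ _L ∈ T, 1 :=
    Finset.sum_le_sum (fun L _ => totalDegree_linF_le _ _ _)
  _ = T.card := by simp

lemma totalDegree_C_mul_prod_ge {T : Finset (Set (ℝ × ℝ))} (hT : ∀ L ∈ T, IsLine L)
    {x : ℝ} (hx : x ≠ 0) :
    T.card ≤ (C x * ∏ L ∈ T, linFOf L).totalDegree := by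
  classical
  have hbad : (⋃ L ∈ (T : Set (Set (ℝ × ℝ))),
      {s : ℝ | (formOf L).1 + (formOf L).2.1 * s = 0}).Finite :=
    Set.Finite.biUnion T.finite_toSet (fun L hL => finite_affine_zero (formOf_spec (hT L hL)).1)
  obtain ⟨s, hs⟩ := (Set.Finite.infinite_compl hbad).nonempty
  simp only [Set.mem_compl_iff, Set.mem_iUnion, Set.mem_setOf_eq, not_exists] at hs
  have hgood : ∀ L ∈ T, (formOf L).1 + (formOf L).2.1 * s ≠ 0 := fun L hL => hs L hL
  have h2 : (psi s (C x * ∏ L ∈ T, linFOf L)).natDegree = T.card := by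
    rw [map_mul, map_prod, psi_C, Polynomial.natDegree_C_mul hx]
    rw [Polynomial.natDegree_prod _ _ (fun L hL => (natDegree_psi_linFOf (hgood L hL)).2)]
    rw [Finset.sum_congr rfl (fun L hL => (natDegree_psi_linFOf (hgood L hL)).1)]
    simp
  calc T.card = (psi s (C x * ∏ L ∈ T, linFOf L)).natDegree := h2.symm
  _ ≤ _ := psi_natDegree_le s _

lemma parSet_bddAbove (A : Finset (Set (ℝ × ℝ))) :
    BddAbove {k : ℕ | ∃ S : Finset (Set (ℝ × ℝ)), S ⊆ A ∧
      (∀ L ∈ S, ∀ L' ∈ S, ParLines L L') ∧ S.card = k} := by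
  refine ⟨A.card, ?_⟩
  rintro k ⟨S, hS, -, rfl⟩
  exact Finset.card_le_card hS

lemma le_pArr {A S : Finset (Set (ℝ × ℝ))} (hS : S ⊆ A)
    (hpar : ∀ L ∈ S, ∀ L' ∈ S, ParLines L L') : S.card ≤ pArr A :=
  le_csSup (parSet_bddAbove A) ⟨S, hS, hpar, rfl⟩

lemma pArr_spec (A : Finset (Set (ℝ × ℝ))) : ∃ S : Finset (Set (ℝ × ℝ)), S ⊆ A ∧
    (∀ L ∈ S, ∀ L' ∈ S, ParLines L L') ∧ S.card = pArr A := by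
  have h0 : (0:ℕ) ∈ {k : ℕ | ∃ S : Finset (Set (ℝ × ℝ)), S ⊆ A ∧
      (∀ L ∈ S, ∀ L' ∈ S, ParLines L L') ∧ S.card = k} :=
    ⟨∅, Finset.empty_subset _, by simp, rfl⟩
  have hmem := Nat.sSup_mem ⟨0, h0⟩ (parSet_bddAbove A)
  exact hmem

/-- **Proposition.** The minimal degree of a nonzero parallel vector field fixing a
nonempty line arrangement `A` with `n` lines is exactly `n - p(A)`: such a parallel
vector field of degree `n - p(A)` exists, and every nonzero parallel vector field
fixing `A` has degree at least `n - p(A)`. -/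
theorem parallel_minimal_degree
    (A : Finset (Set (ℝ × ℝ))) (hA : ∀ L ∈ A, IsLine L) (hne : A.Nonempty) :
    (∃ P Q : MvPolynomial (Fin 2) ℝ, IsParallelVF P Q ∧
        max P.totalDegree Q.totalDegree = A.card - pArr A ∧
        ∀ L ∈ A, InvLine P Q L) ∧
    (∀ P Q : MvPolynomial (Fin 2) ℝ, IsParallelVF P Q → (∀ L ∈ A, InvLine P Q L) →
        A.card - pArr A ≤ max P.totalDegree Q.totalDegree) := by
  classical
  obtain ⟨S₀, hS₀A, hS₀par, hS₀card⟩ := pArr_spec A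
  have hIsA : ∀ L ∈ A, IsLine L := hA
  constructor
  · -- existence
    obtain ⟨L₀, hL₀⟩ : S₀.Nonempty := by
      rcases Finset.eq_empty_or_nonempty S₀ with h | h
      · exfalso
        obtain ⟨L, hL⟩ := hne
        have h1 : 1 ≤ pArr A := by
          have := le_pArr (A := A) (S := {L}) (by simpa using hL) (by
            intro L1 h1 L2 h2
            simp only [Finset.mem_singleton] at h1 h2
            subst h1; subst h2
            exact Or.inl rfl)
          simpa using this
        rw [h, Finset.card_empty] at hS₀card
        omega
      · exact h
    set a0 := (formOf L₀).1 with ha0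
    set b0 := (formOf L₀).2.1 with hb0
    have hL₀line : IsLine L₀ := hA L₀ (hS₀A hL₀)
    have hab0 : (a0, b0) ≠ (0, 0) := (formOf_spec hL₀line).1
    set v : ℝ × ℝ := (-b0, a0) with hv
    have hv0 : v ≠ (0, 0) := by
      intro h0
      apply hab0
      rw [Prod.ext_iff] at h0 ⊢
      simp only [hv, Prod.fst, Prod.snd] at h0 ⊢
      obtain ⟨h1, h2⟩ := h0
      exact ⟨h2, by linarith [h1]⟩
    set f : MvPolynomial (Fin 2) ℝ := ∏ L ∈ A \ S₀, linFOf L with hf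
    have hTline : ∀ L ∈ A \ S₀, IsLine L := fun L hL => hA L (Finset.sdiff_subset hL)
    have hfne : f ≠ 0 := by
      rw [hf]
      exact Finset.prod_ne_zero_iff.2 (fun L hL => (prime_linFOf (hTline L hL)).ne_zero)
    have hvcases : v.1 ≠ 0 ∨ v.2 ≠ 0 := by
      by_contra hc
      push_neg at hc
      exact hv0 (Prod.ext hc.1 hc.2)
    have hNcard : (A \ S₀).card = A.card - pArr A := by
      rw [Finset.card_sdiff_of_subset hS₀A, hS₀card]
    refine ⟨C v.1 * f, C v.2 * f, ⟨?_, v, hv0, by ring⟩, ?_, ?_⟩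
    · rcases hvcases with h | h
      · exact Or.inl (mul_ne_zero (fun h0 => h (by simpa using h0)) hfne)
      · exact Or.inr (mul_ne_zero (fun h0 => h (by simpa using h0)) hfne)
    · -- degree
      have hup1 : (C v.1 * f).totalDegree ≤ (A \ S₀).card := totalDegree_C_mul_prod_le _ _
      have hup2 : (C v.2 * f).totalDegree ≤ (A \ S₀).card := totalDegree_C_mul_prod_le _ _
      have hlow : (A \ S₀).card ≤ max (C v.1 * f).totalDegree (C v.2 * f).totalDegree := by
        rcases hvcases with h | h
        · exact le_trans (totalDegree_C_mul_prod_ge hTline h) (le_max_left _ _)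
        · exact le_trans (totalDegree_C_mul_prod_ge hTline h) (le_max_right _ _)
      rw [← hNcard]
      exact le_antisymm (max_le hup1 hup2) hlow
    · -- invariance
      intro L hL
      have hLline : IsLine L := hA L hL
      obtain ⟨habL, hLeq⟩ := formOf_spec hLline
      by_cases hLS : L ∈ S₀
      · refine ⟨(formOf L).1, (formOf L).2.1, (formOf L).2.2, habL, hLeq, ?_⟩
        have hpar : ParLines L L₀ := hS₀par L hLS L₀ hL₀
        have hdet : (formOf L).1 * b0 = a0 * (formOf L).2.1 := by
          have := parLines_det (a := (formOf L).1) (b := (formOf L).2.1)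
            (c := (formOf L).2.2) (a' := a0) (b' := b0) (c' := (formOf L₀).2.2) habL
            (by rw [← hLeq, ← (formOf_spec hL₀line).2]; exact hpar)
          exact this
        intro q hq
        have hPq : pev (C v.1 * f) q = v.1 * pev f q := by rw [pev_mul, pev_C]
        have hQq : pev (C v.2 * f) q = v.2 * pev f q := by rw [pev_mul, pev_C]
        rw [hPq, hQq]
        have hkey : (formOf L).1 * v.1 + (formOf L).2.1 * v.2 = 0 := by
          have hv1 : v.1 = -b0 := rfl
          have hv2 : v.2 = a0 := rfl
          rw [hv1, hv2]
          linear_combination -hdet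
        linear_combination pev f q * hkey
      · have hLmem : L ∈ A \ S₀ := Finset.mem_sdiff.2 ⟨hL, hLS⟩
        refine ⟨(formOf L).1, (formOf L).2.1, (formOf L).2.2, habL, hLeq, ?_⟩
        intro q hq
        have hfz : pev f q = 0 := by
          obtain ⟨g, hg⟩ := Finset.dvd_prod_of_mem linFOf hLmem
          rw [hf, hg, pev_mul, pev_linFOf_eq_zero hLline hq, zero_mul]
        have hPq : pev (C v.1 * f) q = v.1 * pev f q := by rw [pev_mul, pev_C]
        have hQq : pev (C v.2 * f) q = v.2 * pev f q := by rw [pev_mul, pev_C]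
        rw [hPq, hQq, hfz]
        ring
  · -- lower bound
    rintro P Q ⟨hPQ0, v, hv0, hrel⟩ hinv
    -- extract direction form
    obtain ⟨f, w, hw0, hfne, hP, hQ, hdeg⟩ :
        ∃ (f : MvPolynomial (Fin 2) ℝ) (w : ℝ × ℝ), w ≠ (0, 0) ∧ f ≠ 0 ∧
          P = C w.1 * f ∧ Q = C w.2 * f ∧
          f.totalDegree ≤ max P.totalDegree Q.totalDegree := by
      by_cases hv1 : v.1 = 0
      · have hv2 : v.2 ≠ 0 := by
          intro h0
          exact hv0 (Prod.ext hv1 h0)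
        have hP0 : P = 0 := by
          have h1 : C v.2 * P = 0 := by
            rw [← hrel, hv1]
            simp
          rcases mul_eq_zero.1 h1 with h2 | h2
          · exact absurd h2 (by simpa using hv2)
          · exact h2
        have hQ0 : Q ≠ 0 := by
          rcases hPQ0 with h | h
          · exact absurd hP0 h
          · exact h
        refine ⟨Q, (0, 1), by simp, hQ0, ?_, by simp, le_max_right _ _⟩
        rw [hP0]
        simp
      · have hQeq : Q = C (v.1⁻¹ * v.2) * P := by
          have h2 : C (v.1⁻¹) * (C v.1 * Q) = C (v.1⁻¹) * (C v.2 * P) := by rw [hrel]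
          rw [← mul_assoc, ← C_mul, inv_mul_cancel₀ hv1, C_1, one_mul, ← mul_assoc,
            ← C_mul] at h2
          exact h2
        have hPne : P ≠ 0 := by
          intro h0
          rcases hPQ0 with h | h
          · exact h h0
          · rw [h0, mul_zero] at hQeq
            exact h hQeq
        refine ⟨P, (1, v.1⁻¹ * v.2), by simp, hPne, by simp, hQeq, le_max_left _ _⟩
    set T : Finset (Set (ℝ × ℝ)) := A.filter (fun L => ∀ q ∈ L, pev f q = 0) with hT
    have hTsub : T ⊆ A := Finset.filter_subset _ _
    have hTline : ∀ L ∈ T, IsLine L := fun L hL => hA L (hTsub hL)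
    have hTdvd : (∏ L ∈ T, linFOf L) ∣ f := by
      refine prod_linFOf_dvd T hTline f (fun L hL => ?_)
      obtain ⟨habL, hLeq⟩ := formOf_spec (hTline L hL)
      have hvan : ∀ q ∈ L, pev f q = 0 := (Finset.mem_filter.1 hL).2
      rw [hLeq] at hvan
      exact vanish_dvd habL f hvan
    have hTcard : T.card ≤ f.totalDegree := totalDegree_ge_of_prod_dvd hTline hfne hTdvd
    -- A \ T is pairwise parallel
    have hw0' : (w.1, w.2) ≠ ((0:ℝ), (0:ℝ)) := by
      intro h0
      apply hw0
      rw [Prod.ext_iff] at h0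
      exact Prod.ext h0.1 h0.2
    have horth : ∀ L ∈ A \ T, ∃ a b c : ℝ, (a, b) ≠ (0, 0) ∧ L = lineSet a b c ∧
        a * w.1 + b * w.2 = 0 := by
      intro L hL
      obtain ⟨hLA, hLT⟩ := Finset.mem_sdiff.1 hL
      obtain ⟨a, b, c, hab, hLeq, hzero⟩ := hinv L hLA
      refine ⟨a, b, c, hab, hLeq, ?_⟩
      by_contra hne
      apply hLT
      rw [hT, Finset.mem_filter]
      refine ⟨hLA, fun q hq => ?_⟩
      have h1 := hzero q hq
      rw [hP, hQ, pev_mul, pev_mul, pev_C, pev_C] at h1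
      have h2 : (a * w.1 + b * w.2) * pev f q = 0 := by linarith [h1]
      rcases mul_eq_zero.1 h2 with h3 | h3
      · exact absurd h3 hne
      · exact h3
    have hRpar : ∀ L ∈ A \ T, ∀ L' ∈ A \ T, ParLines L L' := by
      intro L hL L' hL'
      rcases eq_or_ne L L' with h | h
      · exact Or.inl h
      · refine Or.inr ?_
        by_contra hcap
        obtain ⟨q, hqL, hqL'⟩ := Set.nonempty_iff_ne_empty.2 hcap
        obtain ⟨a, b, c, hab, hLeq, ho⟩ := horth L hL
        obtain ⟨a', b', c', hab', hLeq', ho'⟩ := horth L' hL'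
        have hdet : a * b' = a' * b := det_of_orth hw0' ho ho'
        apply h
        rw [hLeq, hLeq']
        exact lineSet_eq_of_det_of_mem hab hab' hdet (hLeq ▸ hqL) (hLeq' ▸ hqL')
    have hRcard : (A \ T).card ≤ pArr A := le_pArr Finset.sdiff_subset hRpar
    have hsd : (A \ T).card = A.card - T.card := Finset.card_sdiff_of_subset hTsub
    have hTA : T.card ≤ A.card := Finset.card_le_card hTsub
    have hfinal : A.card - pArr A ≤ T.card := by omega
    calc A.card - pArr A ≤ T.card := hfinal
    _ ≤ f.totalDegree := hTcard
    _ ≤ max P.totalDegree Q.totalDegree := hdeg
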